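/- There exists a countable family of continuous maps γ_k : I → I with γ_k(0) = 0 and γ_k(1) = 1 such that the complement of ⋃_k graph-images {(γ_k(t), t) : t ∈ I} in the open square (0,1) × (0,1) is 0-dimensional. -/

import Mathlib

open Set unitInterval

/-- "Trapezoid" path: rises from `0` to height `q` by parameter `s`, stays at `q`
until parameter `u`, then rises to `1` at parameter `1` (before clamping). -/
noncomputable def stmt17_fA (q s u : ℚ) (t : ℝ) : ℝ :=
  min ((q / s) * t) (max q (1 + ((1 - q) / (1 - u)) * (t - 1)))

/-- Steep diagonal path: `0` until `s`, linear from `0` to `1` on `[s,u]`, then `1`. -/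
noncomputable def stmt17_fB (s u : ℚ) (t : ℝ) : ℝ := (t - s) / (u - s)

noncomputable def stmt17_GA (q s u : ℚ) : I → I :=
  if 0 < (s:ℝ) ∧ (s:ℝ) ≤ q ∧ (q:ℝ) < 1 ∧ (s:ℝ) < u ∧ (u:ℝ) < 1 then
    fun t => projIcc 0 1 zero_le_one (stmt17_fA q s u t)
  else id

noncomputable def stmt17_GB (s u : ℚ) : I → I :=
  if 0 < (s:ℝ) ∧ (s:ℝ) < u ∧ (u:ℝ) < 1 then
    fun t => projIcc 0 1 zero_le_one (stmt17_fB s u t)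
  else id

noncomputable def stmt17_G : (ℚ × ℚ × ℚ) ⊕ (ℚ × ℚ) → I → I :=
  Sum.elim (fun p => stmt17_GA p.1 p.2.1 p.2.2) (fun p => stmt17_GB p.1 p.2)

lemma stmt17_GA_cont (q s u : ℚ) : Continuous (stmt17_GA q s u) := by
  unfold stmt17_GA
  split
  · exact continuous_projIcc.comp <| by unfold stmt17_fA; fun_prop
  · exact continuous_id

lemma stmt17_GB_cont (s u : ℚ) : Continuous (stmt17_GB s u) := by
  unfold stmt17_GB
  split
  · exact continuous_projIcc.comp <| by unfold stmt17_fB; fun_prop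
  · exact continuous_id

lemma stmt17_GA_zero (q s u : ℚ) : stmt17_GA q s u 0 = 0 := by
  unfold stmt17_GA
  split
  · show projIcc 0 1 zero_le_one (stmt17_fA q s u ((0:I):ℝ)) = 0
    have h0 : stmt17_fA q s u ((0 : I) : ℝ) ≤ 0 := by
      unfold stmt17_fA
      have h : ((0 : I) : ℝ) = 0 := rfl
      rw [h]
      exact min_le_of_left_le (by simp)
    rw [projIcc_of_le_left _ h0]
    rfl
  · rfl

lemma stmt17_GB_zero (s u : ℚ) : stmt17_GB s u 0 = 0 := by
  unfold stmt17_GB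
  split
  · rename_i h
    obtain ⟨hs, hsu, hu1⟩ := h
    show projIcc 0 1 zero_le_one (stmt17_fB s u ((0:I):ℝ)) = 0
    have h0 : stmt17_fB s u ((0 : I) : ℝ) ≤ 0 := by
      unfold stmt17_fB
      have h : ((0 : I) : ℝ) = 0 := rfl
      rw [h]
      apply div_nonpos_of_nonpos_of_nonneg <;> linarith
    rw [projIcc_of_le_left _ h0]
    rfl
  · rfl

lemma stmt17_GA_one (q s u : ℚ) : stmt17_GA q s u 1 = 1 := by
  unfold stmt17_GA
  split
  · rename_i h
    obtain ⟨hs, hsq, hq1, hsu, hu1⟩ := h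
    show projIcc 0 1 zero_le_one (stmt17_fA q s u ((1:I):ℝ)) = 1
    have h1 : (1:ℝ) ≤ stmt17_fA q s u ((1 : I) : ℝ) := by
      unfold stmt17_fA
      have h : ((1 : I) : ℝ) = 1 := rfl
      rw [h]
      apply le_min
      · rw [mul_one, le_div_iff₀ hs, one_mul]; exact hsq
      · exact le_max_of_le_right (by simp)
    rw [projIcc_of_right_le _ h1]
    rfl
  · rfl

lemma stmt17_GB_one (s u : ℚ) : stmt17_GB s u 1 = 1 := by
  unfold stmt17_GB
  split
  · rename_i h
    obtain ⟨hs, hsu, hu1⟩ := h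
    show projIcc 0 1 zero_le_one (stmt17_fB s u ((1:I):ℝ)) = 1
    have h1 : (1:ℝ) ≤ stmt17_fB s u ((1 : I) : ℝ) := by
      unfold stmt17_fB
      have h : ((1 : I) : ℝ) = 1 := rfl
      rw [h]
      rw [le_div_iff₀ (by linarith), one_mul]
      linarith
    rw [projIcc_of_right_le _ h1]
    rfl
  · rfl

/-- Coverage by a trapezoid path: if `s ≤ t ≤ u`, the path passes through `(q, t)`. -/
lemma stmt17_covA (q s u : ℚ) (hs : (0:ℝ) < s) (hsq : (s:ℝ) ≤ q) (hq1 : (q:ℝ) < 1)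
    (hsu : (s:ℝ) < u) (hu1 : (u:ℝ) < 1) (t : I) (hst : (s:ℝ) ≤ t) (htu : (t:ℝ) ≤ u)
    (x : I) (hx : (x:ℝ) = q) : stmt17_GA q s u t = x := by
  unfold stmt17_GA
  rw [if_pos ⟨hs, hsq, hq1, hsu, hu1⟩]
  have hval : stmt17_fA q s u (t : ℝ) = q := by
    unfold stmt17_fA
    have h1 : (q:ℝ) ≤ (q / s) * t := by
      rw [div_mul_eq_mul_div, le_div_iff₀ hs]
      have hq0 : (0:ℝ) < q := lt_of_lt_of_le hs hsq
      nlinarith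
    have h2 : 1 + ((1 - (q:ℝ)) / (1 - u)) * ((t:ℝ) - 1) ≤ q := by
      have h1u : (0:ℝ) < 1 - u := by linarith
      have hd0 : (0:ℝ) ≤ (1 - (q:ℝ)) / (1 - u) := div_nonneg (by linarith) h1u.le
      have hdm : ((1 - (q:ℝ)) / (1 - u)) * (1 - u) = 1 - q := div_mul_cancel₀ _ (ne_of_gt h1u)
      nlinarith [mul_le_mul_of_nonneg_left (by linarith : (t:ℝ) - 1 ≤ (u:ℝ) - 1) hd0]
    rw [max_eq_left h2, min_eq_right h1]
  have hmem : stmt17_fA q s u (t : ℝ) ∈ Icc (0:ℝ) 1 := by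
    rw [hval]
    constructor
    · linarith
    · linarith
  show projIcc 0 1 zero_le_one (stmt17_fA q s u (t:ℝ)) = x
  rw [projIcc_of_mem _ hmem]
  exact Subtype.ext (by simp [hval, hx])

/-- Coverage by a diagonal path: it passes through `(x, s + x(u-s))`. -/
lemma stmt17_covB (s u : ℚ) (hs : (0:ℝ) < s) (hsu : (s:ℝ) < u) (hu1 : (u:ℝ) < 1)
    (x t : I) (ht : (t:ℝ) = s + (x:ℝ) * (u - s)) : stmt17_GB s u t = x := by
  unfold stmt17_GB
  rw [if_pos ⟨hs, hsu, hu1⟩]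
  have hval : stmt17_fB s u (t : ℝ) = x := by
    unfold stmt17_fB
    rw [ht, add_sub_cancel_left, mul_div_assoc, div_self (by linarith : (u:ℝ) - s ≠ 0), mul_one]
  have hmem : stmt17_fB s u (t : ℝ) ∈ Icc (0:ℝ) 1 := by rw [hval]; exact x.2
  show projIcc 0 1 zero_le_one (stmt17_fB s u (t:ℝ)) = x
  rw [projIcc_of_mem _ hmem]
  exact Subtype.ext (by simp [hval])

lemma stmt17_G_cont (i : (ℚ × ℚ × ℚ) ⊕ (ℚ × ℚ)) : Continuous (stmt17_G i) := by
  rcases i with ⟨q, s, u⟩ | ⟨s, u⟩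
  · exact stmt17_GA_cont q s u
  · exact stmt17_GB_cont s u

lemma stmt17_G_zero (i : (ℚ × ℚ × ℚ) ⊕ (ℚ × ℚ)) : stmt17_G i 0 = 0 := by
  rcases i with ⟨q, s, u⟩ | ⟨s, u⟩
  · exact stmt17_GA_zero q s u
  · exact stmt17_GB_zero s u

lemma stmt17_G_one (i : (ℚ × ℚ × ℚ) ⊕ (ℚ × ℚ)) : stmt17_G i 1 = 1 := by
  rcases i with ⟨q, s, u⟩ | ⟨s, u⟩
  · exact stmt17_GA_one q s u
  · exact stmt17_GB_one s u

/-- there is a countable family of paths `γ_k : I → I` from `0` to `1` whose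
graph-images `{(γ_k t, t)}` fill the open square up to a `0`-dimensional complement. -/
theorem stmt_17 :
    ∃ γ : ℕ → I → I, (∀ k, Continuous (γ k)) ∧ (∀ k, γ k 0 = 0) ∧ (∀ k, γ k 1 = 1) ∧
      IsTotallyDisconnected
        ({p : I × I | (p.1 : ℝ) ∈ Ioo (0 : ℝ) 1 ∧ (p.2 : ℝ) ∈ Ioo (0 : ℝ) 1} \
          ⋃ k, {p : I × I | ∃ t : I, p = (γ k t, t)}) := by
  classical
  let e : ((ℚ × ℚ × ℚ) ⊕ (ℚ × ℚ)) ≃ ℕ := Denumerable.eqv _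
  refine ⟨fun k => stmt17_G (e.symm k), fun k => stmt17_G_cont _, fun k => stmt17_G_zero _,
    fun k => stmt17_G_one _, ?_⟩
  intro S hS hconn
  -- Any point of `S` is not on any of the curves.
  have hnotcov : ∀ z ∈ S, ∀ i : (ℚ × ℚ × ℚ) ⊕ (ℚ × ℚ), stmt17_G i z.2 ≠ z.1 := by
    intro z hz i hGi
    apply (hS hz).2
    rw [mem_iUnion]
    refine ⟨e i, z.2, ?_⟩
    simp only [Equiv.symm_apply_apply, hGi]
  -- First coordinates of points of `S` all agree.
  have auxfst : ∀ z ∈ S, ∀ w ∈ S, ¬ ((z.1:ℝ) < (w.1:ℝ)) := by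
    intro z hz w hw hlt
    obtain ⟨r, hr1, hr2⟩ := exists_rat_btwn hlt
    have hJ : IsPreconnected ((fun a : I × I => (a.1 : ℝ)) '' S) :=
      hconn.image _ (Continuous.continuousOn
        (continuous_subtype_val.comp continuous_fst))
    have hrJ : (r:ℝ) ∈ (fun a : I × I => (a.1 : ℝ)) '' S :=
      hJ.Icc_subset ⟨z, hz, rfl⟩ ⟨w, hw, rfl⟩ ⟨hr1.le, hr2.le⟩
    obtain ⟨y, hyS, hy1⟩ := hrJ
    have hy1mem := (hS hyS).1.1
    have hy2mem := (hS hyS).1.2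
    have hr0 : (0:ℝ) < r := hy1 ▸ hy1mem.1
    have hrlt1 : (r:ℝ) < 1 := hy1 ▸ hy1mem.2
    obtain ⟨s, hs0, hslt⟩ := exists_rat_btwn (lt_min hr0 hy2mem.1)
    obtain ⟨u, hult, hu1⟩ := exists_rat_btwn hy2mem.2
    have hcov := stmt17_covA r s u hs0 (le_of_lt (lt_of_lt_of_le hslt (min_le_left _ _)))
      hrlt1 (lt_trans (lt_of_lt_of_le hslt (min_le_right _ _)) hult) hu1 y.2
      (le_of_lt (lt_of_lt_of_le hslt (min_le_right _ _))) hult.le y.1 hy1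
    exact hnotcov y hyS (Sum.inl (r, s, u)) hcov
  have hfst : ∀ z ∈ S, ∀ w ∈ S, (z.1:ℝ) = (w.1:ℝ) := by
    intro z hz w hw
    rcases lt_trichotomy (z.1:ℝ) (w.1:ℝ) with h | h | h
    · exact absurd h (auxfst z hz w hw)
    · exact h
    · exact absurd h (auxfst w hw z hz)
  -- Second coordinates of points of `S` all agree.
  have auxsnd : ∀ z ∈ S, ∀ w ∈ S, ¬ ((z.2:ℝ) < (w.2:ℝ)) := by
    intro z hz w hw hlt
    have hz' := (hS hz).1
    have hw' := (hS hw).1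
    obtain ⟨s, hs1, hs2⟩ := exists_rat_btwn hlt
    obtain ⟨u, hu1, hu2⟩ := exists_rat_btwn hs2
    have hs0 : (0:ℝ) < s := lt_trans hz'.2.1 hs1
    have hult1 : (u:ℝ) < 1 := lt_trans hu2 hw'.2.2
    have hsu : (s:ℝ) < u := hu1
    have hc0 : (0:ℝ) < (z.1:ℝ) := hz'.1.1
    have hc1 : (z.1:ℝ) < 1 := hz'.1.2
    have htstar1 : (s:ℝ) < s + (z.1:ℝ) * (u - s) := by nlinarith
    have htstar2 : s + (z.1:ℝ) * (u - s) < (u:ℝ) := by nlinarith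
    have hJ : IsPreconnected ((fun a : I × I => (a.2 : ℝ)) '' S) :=
      hconn.image _ (Continuous.continuousOn
        (continuous_subtype_val.comp continuous_snd))
    have htJ : s + (z.1:ℝ) * (u - s) ∈ (fun a : I × I => (a.2 : ℝ)) '' S :=
      hJ.Icc_subset ⟨z, hz, rfl⟩ ⟨w, hw, rfl⟩ ⟨by linarith, by linarith⟩
    obtain ⟨y, hyS, hy2⟩ := htJ
    have hy1 : (y.1:ℝ) = (z.1:ℝ) := hfst y hyS z hz
    have hx : (y.2:ℝ) = s + (y.1:ℝ) * (u - s) := by rw [hy1]; exact hy2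
    have hcov := stmt17_covB s u hs0 hsu hult1 y.1 y.2 hx
    exact hnotcov y hyS (Sum.inr (s, u)) hcov
  intro p hp q hq
  have h1 : (p.1:ℝ) = (q.1:ℝ) := hfst p hp q hq
  have h2 : (p.2:ℝ) = (q.2:ℝ) := by
    rcases lt_trichotomy (p.2:ℝ) (q.2:ℝ) with h | h | h
    · exact absurd h (auxsnd p hp q hq)
    · exact h
    · exact absurd h (auxsnd q hq p hp)
  exact Prod.ext (Subtype.ext h1) (Subtype.ext h2)
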